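/- (Lower bound for the adaptive Han–Kobayashi exponent) For channels W, W̄ and any r, under any sequence of adaptive strategies and tests with liminf (−1/n) log E_{Q_{W̄,P⃗ⁿ}}[1−f_n] ≥ r, one has liminf_{n→∞} (−1/n) log E_{Q_{W,P⃗ⁿ}}[1−f_n] ≥ sup_{s≤0} (−s·r − φ(s|W‖W̄))/(1−s), where φ(s|W‖W̄) = sup_x φ(s|W_x‖W̄_x). -/

import Mathlib

open Filter

/-- `W` is a (classical) channel from `X` to `Y` with full-support outputs. -/
def IsChannel {X Y : Type*} [Fintype Y] (W : X → Y → ℝ) : Prop :=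
  ∀ x, (∀ y, 0 < W x y) ∧ ∑ y, W x y = 1

/-- An adaptive strategy: for each step `k`, a conditional distribution of the
`(k+1)`-st input given the first `k` input-output pairs. -/
def IsStrategy {X Y : Type*} [Fintype X]
    (strat : (k : ℕ) → (Fin k → X × Y) → X → ℝ) : Prop :=
  ∀ k h, (∀ x, 0 ≤ strat k h x) ∧ ∑ x, strat k h x = 1

/-- Joint distribution of `n` adaptive input-output pairs under channel `W`. -/
noncomputable def Qdist {X Y : Type*} [Fintype X] [Fintype Y] (W : X → Y → ℝ)
    (strat : (k : ℕ) → (Fin k → X × Y) → X → ℝ) (n : ℕ) (h : Fin n → X × Y) : ℝ :=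
  ∏ k : Fin n,
    strat k.1 (fun j : Fin k.1 => h ⟨j.1, j.2.trans k.2⟩) (h k).1 * W (h k).1 (h k).2

/-- Marginal distribution of the `(k+1)`-st input under channel `W`. -/
noncomputable def inMarg {X Y : Type*} [Fintype X] [Fintype Y] (W : X → Y → ℝ)
    (strat : (k : ℕ) → (Fin k → X × Y) → X → ℝ) (k : ℕ) (x : X) : ℝ :=
  ∑ h : Fin k → X × Y, Qdist W strat k h * strat k h x

/-- Kullback–Leibler divergence of finitely supported distributions. -/
noncomputable def Dkl {α : Type*} [Fintype α] (P Q : α → ℝ) : ℝ :=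
  ∑ a, P a * Real.log (P a / Q a)

/-- `φ(s|P‖Q) = log ∑ Q^s P^{1-s}`. -/
noncomputable def phiRel {α : Type*} [Fintype α] (s : ℝ) (P Q : α → ℝ) : ℝ :=
  Real.log (∑ a, Q a ^ s * P a ^ (1 - s))

section aux

variable {X Y : Type*} [Fintype X] [Fintype Y]

lemma snoc_lt {n : ℕ} {β : Type*} (h : Fin n → β) (p : β) (j : Fin (n+1)) (hj : j.1 < n) :
    (Fin.snoc h p : Fin (n+1) → β) j = h ⟨j.1, hj⟩ := by
  simp [Fin.snoc, hj]
  rfl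

lemma Qdist_snoc (c : X → Y → ℝ) (strat : (k : ℕ) → (Fin k → X × Y) → X → ℝ)
    (n : ℕ) (h : Fin n → X × Y) (p : X × Y) :
    Qdist c strat (n+1) (Fin.snoc h p) =
      Qdist c strat n h * (strat n h p.1 * c p.1 p.2) := by
  unfold Qdist
  rw [Fin.prod_univ_castSucc]
  congr 1
  · apply Finset.prod_congr rfl
    intro k _
    have h1 : (Fin.snoc h p : Fin (n+1) → X × Y) (Fin.castSucc k) = h k :=
      Fin.snoc_castSucc _ _ _
    rw [h1]
    congr 1
    · congr 1
      funext j
      exact snoc_lt h p _ (j.2.trans k.2)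
  · have h2 : (Fin.snoc h p : Fin (n+1) → X × Y) (Fin.last n) = p := Fin.snoc_last _ _
    rw [h2]
    congr 1
    congr 1
    funext j
    rw [snoc_lt h p _ j.2]
    exact congrArg h (Fin.ext rfl)

lemma Qdist_nonneg (c : X → Y → ℝ) (strat : (k : ℕ) → (Fin k → X × Y) → X → ℝ)
    (hstrat : ∀ k h x, 0 ≤ strat k h x) (hc : ∀ x y, 0 ≤ c x y) (n : ℕ) (h : Fin n → X × Y) :
    0 ≤ Qdist c strat n h :=
  Finset.prod_nonneg fun _ _ => mul_nonneg (hstrat _ _ _) (hc _ _)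

lemma sum_snoc (n : ℕ) (F : (Fin (n+1) → X × Y) → ℝ) :
    ∑ h : Fin (n+1) → X × Y, F h
      = ∑ h : Fin n → X × Y, ∑ p : X × Y, F (Fin.snoc h p) := by
  rw [← Fintype.sum_equiv (Fin.snocEquiv (fun _ => X × Y))
    (fun q => F (Fin.snoc q.2 q.1)) F (fun q => rfl)]
  rw [Fintype.sum_prod_type]
  exact Finset.sum_comm

lemma Qdist_sum_le (c : X → Y → ℝ) (strat : (k : ℕ) → (Fin k → X × Y) → X → ℝ)
    (hstrat : IsStrategy strat) (hc : ∀ x y, 0 ≤ c x y) {C : ℝ} (hC0 : 0 ≤ C)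
    (hC : ∀ x, ∑ y, c x y ≤ C) (n : ℕ) :
    ∑ h : Fin n → X × Y, Qdist c strat n h ≤ C ^ n := by
  induction n with
  | zero => simp [Qdist]
  | succ n ih =>
    rw [sum_snoc]
    have key : ∀ h : Fin n → X × Y,
        ∑ p : X × Y, Qdist c strat (n+1) (Fin.snoc h p) ≤ Qdist c strat n h * C := by
      intro h
      have : ∀ p : X × Y, Qdist c strat (n+1) (Fin.snoc h p)
          = Qdist c strat n h * (strat n h p.1 * c p.1 p.2) := fun p => Qdist_snoc ..
      simp only [this]
      rw [← Finset.mul_sum]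
      apply mul_le_mul_of_nonneg_left _ (Qdist_nonneg c strat (fun k h x => (hstrat k h).1 x) hc n h)
      rw [Fintype.sum_prod_type]
      calc ∑ x : X, ∑ y : Y, strat n h x * c x y
          = ∑ x : X, strat n h x * ∑ y, c x y := by
            apply Finset.sum_congr rfl; intro x _; rw [Finset.mul_sum]
        _ ≤ ∑ x : X, strat n h x * C :=
            Finset.sum_le_sum fun x _ => mul_le_mul_of_nonneg_left (hC x) ((hstrat n h).1 x)
        _ = C := by rw [← Finset.sum_mul, (hstrat n h).2, one_mul]
    calc ∑ h : Fin n → X × Y, ∑ p : X × Y, Qdist c strat (n+1) (Fin.snoc h p)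
        ≤ ∑ h : Fin n → X × Y, Qdist c strat n h * C := Finset.sum_le_sum fun h _ => key h
      _ = (∑ h : Fin n → X × Y, Qdist c strat n h) * C := by rw [Finset.sum_mul]
      _ ≤ C ^ n * C := mul_le_mul_of_nonneg_right ih hC0
      _ = C ^ (n+1) := by ring

lemma Qdist_zero (V V' : X → Y → ℝ) (hV : ∀ x y, 0 < V x y)
    (strat : (k : ℕ) → (Fin k → X × Y) → X → ℝ) (n : ℕ) (h : Fin n → X × Y)
    (h0 : Qdist V strat n h = 0) : Qdist V' strat n h = 0 := by
  unfold Qdist at h0 ⊢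
  rw [Finset.prod_eq_zero_iff] at h0 ⊢
  obtain ⟨k, hk, hz⟩ := h0
  refine ⟨k, hk, ?_⟩
  rcases mul_eq_zero.1 hz with ha | hw
  · rw [ha, zero_mul]
  · exact absurd hw (ne_of_gt (hV _ _))

lemma Qdist_tilt (W Wb : X → Y → ℝ) (hW : ∀ x y, 0 < W x y) (hWb : ∀ x y, 0 < Wb x y)
    (strat : (k : ℕ) → (Fin k → X × Y) → X → ℝ) (hstrat : ∀ k h x, 0 ≤ strat k h x)
    {s : ℝ} (hs : s ≠ 0) (n : ℕ) (h : Fin n → X × Y) :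
    Qdist Wb strat n h ^ s * Qdist W strat n h ^ (1 - s)
      = Qdist (fun x y => Wb x y ^ s * W x y ^ (1 - s)) strat n h := by
  unfold Qdist
  rw [← Real.finset_prod_rpow _ _ (fun k _ => mul_nonneg (hstrat _ _ _) (hWb _ _).le) s,
    ← Real.finset_prod_rpow _ _ (fun k _ => mul_nonneg (hstrat _ _ _) (hW _ _).le) (1 - s),
    ← Finset.prod_mul_distrib]
  apply Finset.prod_congr rfl
  intro k _
  beta_reduce
  set ak := strat k.1 (fun j : Fin k.1 => h ⟨j.1, j.2.trans k.2⟩) (h k).1 with hak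
  have hann : 0 ≤ ak := by rw [hak]; exact hstrat _ _ _
  rcases eq_or_lt_of_le hann with ha | ha
  · rw [← ha]
    rw [zero_mul, zero_mul, zero_mul, Real.zero_rpow hs, zero_mul]
  · rw [Real.mul_rpow ha.le (hWb _ _).le, Real.mul_rpow ha.le (hW _ _).le]
    have : ak ^ s * Wb (h k).1 (h k).2 ^ s * (ak ^ (1 - s) * W (h k).1 (h k).2 ^ (1 - s))
        = (ak ^ s * ak ^ (1 - s)) * (Wb (h k).1 (h k).2 ^ s * W (h k).1 (h k).2 ^ (1 - s)) := by
      ring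
    rw [this, ← Real.rpow_add ha, add_sub_cancel, Real.rpow_one]

lemma liminf_of_not_cobounded {u : ℕ → ℝ}
    (h : ¬ Filter.IsCoboundedUnder (· ≥ ·) Filter.atTop u) :
    Filter.liminf u Filter.atTop = 0 := by
  rw [Filter.liminf_eq]
  apply Real.sSup_of_not_bddAbove
  intro hb
  apply h
  obtain ⟨c, hc⟩ := hb
  refine ⟨c, fun a ha => ?_⟩
  exact hc (by rwa [Filter.eventually_map] at ha)

end aux
lemma holder_aux {α : Type*} [Fintype α] (P Pb g : α → ℝ) {s : ℝ} (hs : s < 0)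
    (hP : ∀ a, 0 ≤ P a) (hPb : ∀ a, 0 ≤ Pb a) (hsupp : ∀ a, Pb a = 0 → P a = 0)
    (hg0 : ∀ a, 0 ≤ g a) (hg1 : ∀ a, g a ≤ 1) :
    ∑ a, P a * g a ≤
      (∑ a, Pb a ^ s * P a ^ (1 - s)) ^ (1 / (1 - s)) *
        (∑ a, Pb a * g a) ^ (-s / (1 - s)) := by
  have hs0 : s ≠ 0 := ne_of_lt hs
  have h1s : (0:ℝ) < 1 - s := by linarith
  have h1s' : (1:ℝ) - s ≠ 0 := ne_of_gt h1s
  have hinv : 1 / (1 - s) ≠ 0 := one_div_ne_zero h1s'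
  have hinvpos : 0 < 1 / (1 - s) := by positivity
  have hexp : -s / (1 - s) ≠ 0 := div_ne_zero (neg_ne_zero.2 hs0) h1s'
  have hinv' : (1 - s)⁻¹ ≠ 0 := inv_ne_zero h1s'
  have hpq : (1 - s).HolderConjugate ((1 - s) / (-s)) := by
    rw [Real.holderConjugate_iff]
    constructor
    · linarith
    · rw [inv_div]
      field_simp
      ring
  have hqinv : 1 / ((1 - s) / (-s)) = -s / (1 - s) := by
    rw [one_div, inv_div]
  have hbase : ∀ a, 0 ≤ Pb a ^ s * P a ^ (1 - s) * g a := fun a =>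
    mul_nonneg (mul_nonneg (Real.rpow_nonneg (hPb a) _) (Real.rpow_nonneg (hP a) _)) (hg0 a)
  have hu0 : ∀ a, 0 ≤ (Pb a ^ s * P a ^ (1 - s) * g a) ^ (1 / (1 - s)) := fun a =>
    Real.rpow_nonneg (hbase a) _
  have hv0 : ∀ a, 0 ≤ (Pb a * g a) ^ (-s / (1 - s)) := fun a =>
    Real.rpow_nonneg (mul_nonneg (hPb a) (hg0 a)) _
  have key1 : ∀ a, P a * g a =
      (Pb a ^ s * P a ^ (1 - s) * g a) ^ (1 / (1 - s)) * (Pb a * g a) ^ (-s / (1 - s)) := by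
    intro a
    rcases eq_or_lt_of_le (hPb a) with hb | hb
    · have hb' : Pb a = 0 := hb.symm
      have hP0 : P a = 0 := hsupp a hb'
      rw [hP0, hb']
      simp [Real.zero_rpow hs0, Real.zero_rpow hinv', Real.zero_rpow hexp]
    · rcases eq_or_lt_of_le (hg0 a) with hga | hga
      · rw [← hga]
        simp [Real.zero_rpow hinv', Real.zero_rpow hexp]
      · rcases eq_or_lt_of_le (hP a) with hPa | hPa
        · rw [← hPa]
          simp [Real.zero_rpow h1s', Real.zero_rpow hinv', Real.zero_rpow hexp]
        · have e1 : (Pb a ^ s * P a ^ (1 - s) * g a) ^ (1 / (1 - s)) =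
              Pb a ^ (s * (1 / (1 - s))) * P a * g a ^ (1 / (1 - s)) := by
            rw [Real.mul_rpow (mul_nonneg (Real.rpow_nonneg (hPb a) _)
                (Real.rpow_nonneg (hP a) _)) (hg0 a),
              Real.mul_rpow (Real.rpow_nonneg (hPb a) _) (Real.rpow_nonneg (hP a) _),
              ← Real.rpow_mul (hPb a), ← Real.rpow_mul (hP a),
              mul_one_div (1 - s) (1 - s), div_self h1s', Real.rpow_one]
          have e2 : (Pb a * g a) ^ (-s / (1 - s)) =
              Pb a ^ (-s / (1 - s)) * g a ^ (-s / (1 - s)) :=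
            Real.mul_rpow (hPb a) (hg0 a)
          rw [e1, e2]
          have e3 : Pb a ^ (s * (1 / (1 - s))) * P a * g a ^ (1 / (1 - s)) *
              (Pb a ^ (-s / (1 - s)) * g a ^ (-s / (1 - s)))
              = (Pb a ^ (s * (1 / (1 - s))) * Pb a ^ (-s / (1 - s))) *
                (g a ^ (1 / (1 - s)) * g a ^ (-s / (1 - s))) * P a := by ring
          rw [e3, ← Real.rpow_add hb, ← Real.rpow_add hga]
          have ea : s * (1 / (1 - s)) + -s / (1 - s) = 0 := by ring
          have eb : 1 / (1 - s) + -s / (1 - s) = 1 := by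
            rw [← add_div]
            exact div_self h1s'
          rw [ea, eb, Real.rpow_zero, Real.rpow_one, one_mul]
          ring
  have key2 : ∀ a, ((Pb a ^ s * P a ^ (1 - s) * g a) ^ (1 / (1 - s))) ^ (1 - s) =
      Pb a ^ s * P a ^ (1 - s) * g a := by
    intro a
    rw [← Real.rpow_mul (hbase a), one_div_mul_cancel h1s', Real.rpow_one]
  have key3 : ∀ a, ((Pb a * g a) ^ (-s / (1 - s))) ^ ((1 - s) / (-s)) = Pb a * g a := by
    intro a
    have he : -s / (1 - s) * ((1 - s) / (-s)) = 1 := by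
      field_simp
    rw [← Real.rpow_mul (mul_nonneg (hPb a) (hg0 a)), he, Real.rpow_one]
  calc ∑ a, P a * g a
      = ∑ a, (Pb a ^ s * P a ^ (1 - s) * g a) ^ (1 / (1 - s)) * (Pb a * g a) ^ (-s / (1 - s)) :=
        Finset.sum_congr rfl fun a _ => key1 a
    _ ≤ (∑ a, ((Pb a ^ s * P a ^ (1 - s) * g a) ^ (1 / (1 - s))) ^ (1 - s)) ^ (1 / (1 - s)) *
        (∑ a, ((Pb a * g a) ^ (-s / (1 - s))) ^ ((1 - s) / (-s))) ^ (1 / ((1 - s) / (-s))) :=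
        Real.inner_le_Lp_mul_Lq_of_nonneg (s := Finset.univ) hpq
          (fun a _ => hu0 a) (fun a _ => hv0 a)
    _ ≤ (∑ a, Pb a ^ s * P a ^ (1 - s)) ^ (1 / (1 - s)) *
        (∑ a, Pb a * g a) ^ (-s / (1 - s)) := by
        rw [hqinv]
        have e4 : (∑ a, ((Pb a * g a) ^ (-s / (1 - s))) ^ ((1 - s) / (-s)))
            = ∑ a, Pb a * g a := Finset.sum_congr rfl fun a _ => key3 a
        rw [e4]
        apply mul_le_mul_of_nonneg_right _ (Real.rpow_nonneg
          (Finset.sum_nonneg fun a _ => mul_nonneg (hPb a) (hg0 a)) _)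
        apply Real.rpow_le_rpow
          (Finset.sum_nonneg fun a _ => (key2 a).symm ▸ hbase a) _ (le_of_lt hinvpos)
        calc ∑ a, ((Pb a ^ s * P a ^ (1 - s) * g a) ^ (1 / (1 - s))) ^ (1 - s)
            = ∑ a, Pb a ^ s * P a ^ (1 - s) * g a :=
              Finset.sum_congr rfl fun a _ => key2 a
          _ ≤ ∑ a, Pb a ^ s * P a ^ (1 - s) := Finset.sum_le_sum fun a _ => by
              have h0 : 0 ≤ Pb a ^ s * P a ^ (1 - s) :=
                mul_nonneg (Real.rpow_nonneg (hPb a) _) (Real.rpow_nonneg (hP a) _)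
              nlinarith [hg1 a, hg0 a]

theorem stmt16 {X Y : Type*} [Fintype X] [Fintype Y] [Nonempty X]
    (W Wb : X → Y → ℝ) (hW : IsChannel W) (hWb : IsChannel Wb)
    (strats : ℕ → (k : ℕ) → (Fin k → X × Y) → X → ℝ)
    (hstrats : ∀ n, IsStrategy (strats n))
    (f : (n : ℕ) → (Fin n → X × Y) → ℝ)
    (hf : ∀ n h, f n h ∈ Set.Icc (0 : ℝ) 1) (r : ℝ)
    (hrate : r ≤
      Filter.liminf (fun n : ℕ => (-1 / (n : ℝ)) *
        Real.log (∑ h : Fin n → X × Y, Qdist Wb (strats n) n h * (1 - f n h)))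
        atTop) :
    (⨆ s : Set.Iic (0 : ℝ),
        (-(s : ℝ) * r - ⨆ x, phiRel (s : ℝ) (W x) (Wb x)) / (1 - (s : ℝ))) ≤
      Filter.liminf (fun n : ℕ => (-1 / (n : ℝ)) *
        Real.log (∑ h : Fin n → X × Y, Qdist W (strats n) n h * (1 - f n h)))
        atTop := by
  classical
  haveI : Nonempty (Set.Iic (0:ℝ)) := ⟨⟨0, Set.mem_Iic.2 (le_refl 0)⟩⟩
  haveI hYne : Nonempty Y := by
    rcases isEmpty_or_nonempty Y with hY | hY
    · exfalso
      have h2 := (hW (Classical.arbitrary X)).2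
      rw [Finset.univ_eq_empty, Finset.sum_empty] at h2
      exact zero_ne_one h2
    · exact hY
  have hWpos : ∀ x y, 0 < W x y := fun x y => (hW x).1 y
  have hWbpos : ∀ x y, 0 < Wb x y := fun x y => (hWb x).1 y
  have hstr0 : ∀ n k h x, 0 ≤ strats n k h x := fun n k h x => ((hstrats n) k h).1 x
  set b : ℕ → ℝ := fun n => (-1 / (n : ℝ)) *
      Real.log (∑ h : Fin n → X × Y, Qdist Wb (strats n) n h * (1 - f n h)) with hbdef
  set a : ℕ → ℝ := fun n => (-1 / (n : ℝ)) *
      Real.log (∑ h : Fin n → X × Y, Qdist W (strats n) n h * (1 - f n h)) with hadef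
  set E : ℕ → ℝ := fun n => ∑ h : Fin n → X × Y, Qdist W (strats n) n h * (1 - f n h)
    with hEdef
  set B : ℕ → ℝ := fun n => ∑ h : Fin n → X × Y, Qdist Wb (strats n) n h * (1 - f n h)
    with hBdef
  have haE : ∀ n, a n = (-1 / (n : ℝ)) * Real.log (E n) := fun n => rfl
  have hbB : ∀ n, b n = (-1 / (n : ℝ)) * Real.log (B n) := fun n => rfl
  have hg0 : ∀ n h, 0 ≤ 1 - f n h := fun n h => by linarith [(hf n h).2]
  have hg1 : ∀ n h, 1 - f n h ≤ 1 := fun n h => by linarith [(hf n h).1]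
  -- generic facts for both channels
  have hEfacts : ∀ (V : X → Y → ℝ), IsChannel V → ∀ n,
      (0 ≤ ∑ h : Fin n → X × Y, Qdist V (strats n) n h * (1 - f n h)) ∧
      (∑ h : Fin n → X × Y, Qdist V (strats n) n h * (1 - f n h)) ≤ 1 := by
    intro V hV n
    have hQnn : ∀ h, 0 ≤ Qdist V (strats n) n h :=
      Qdist_nonneg V (strats n) (hstr0 n) (fun x y => ((hV x).1 y).le) n
    constructor
    · exact Finset.sum_nonneg fun h _ => mul_nonneg (hQnn h) (hg0 n h)
    · calc ∑ h : Fin n → X × Y, Qdist V (strats n) n h * (1 - f n h)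
          ≤ ∑ h : Fin n → X × Y, Qdist V (strats n) n h :=
            Finset.sum_le_sum fun h _ => mul_le_of_le_one_right (hQnn h) (hg1 n h)
        _ ≤ 1 ^ n := Qdist_sum_le V (strats n) (hstrats n)
            (fun x y => ((hV x).1 y).le) zero_le_one (fun x => le_of_eq (hV x).2) n
        _ = 1 := one_pow n
  have hE0 : ∀ n, 0 ≤ E n := fun n => (hEfacts W hW n).1
  have hE1 : ∀ n, E n ≤ 1 := fun n => (hEfacts W hW n).2
  have hB0 : ∀ n, 0 ≤ B n := fun n => (hEfacts Wb hWb n).1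
  have hB1 : ∀ n, B n ≤ 1 := fun n => (hEfacts Wb hWb n).2
  have hann : ∀ n, 0 ≤ a n := by
    intro n
    rw [haE n]
    have h1 : Real.log (E n) ≤ 0 := Real.log_nonpos (hE0 n) (hE1 n)
    have h2 : -1 / (n:ℝ) ≤ 0 := by
      apply div_nonpos_of_nonpos_of_nonneg <;> [linarith; positivity]
    nlinarith [mul_nonneg (neg_nonneg.2 h2) (neg_nonneg.2 h1)]
  have hbnn : ∀ n, 0 ≤ b n := by
    intro n
    rw [hbB n]
    have h1 : Real.log (B n) ≤ 0 := Real.log_nonpos (hB0 n) (hB1 n)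
    have h2 : -1 / (n:ℝ) ≤ 0 := by
      apply div_nonpos_of_nonpos_of_nonneg <;> [linarith; positivity]
    nlinarith [mul_nonneg (neg_nonneg.2 h2) (neg_nonneg.2 h1)]
  -- zero equivalence
  have hzero : ∀ n, E n = 0 ↔ B n = 0 := by
    intro n
    have gen : ∀ (V V' : X → Y → ℝ), (∀ x y, 0 < V x y) → (∀ x y, 0 < V' x y) →
        (∑ h : Fin n → X × Y, Qdist V (strats n) n h * (1 - f n h)) = 0 →
        (∑ h : Fin n → X × Y, Qdist V' (strats n) n h * (1 - f n h)) = 0 := by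
      intro V V' hV hV' hsum
      have hnn : ∀ h ∈ (Finset.univ : Finset (Fin n → X × Y)),
          0 ≤ Qdist V (strats n) n h * (1 - f n h) := fun h _ =>
        mul_nonneg (Qdist_nonneg V (strats n) (hstr0 n) (fun x y => (hV x y).le) n h) (hg0 n h)
      rw [Finset.sum_eq_zero_iff_of_nonneg hnn] at hsum
      apply Finset.sum_eq_zero
      intro h hh
      rcases mul_eq_zero.1 (hsum h hh) with hq | hgz
      · rw [Qdist_zero V V' hV (strats n) n h hq, zero_mul]
      · rw [hgz, mul_zero]
    exact ⟨gen W Wb hWpos hWbpos, gen Wb W hWbpos hWpos⟩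
  -- nonnegativity of the sup of phiRel
  have hbdd : ∀ s : ℝ, BddAbove (Set.range fun x => phiRel s (W x) (Wb x)) :=
    fun s => Set.Finite.bddAbove (Set.finite_range _)
  have hPhile : ∀ (s : ℝ) (x : X), phiRel s (W x) (Wb x) ≤ ⨆ x, phiRel s (W x) (Wb x) :=
    fun s x => le_ciSup (hbdd s) x
  have hPhi0 : ∀ s : ℝ, s ≤ 0 → 0 ≤ ⨆ x, phiRel s (W x) (Wb x) := by
    intro s hs
    set x0 := Classical.arbitrary X
    refine le_trans ?_ (hPhile s x0)
    rcases eq_or_lt_of_le hs with hs0 | hsneg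
    · rw [hs0]
      unfold phiRel
      norm_num [Real.rpow_zero, Real.rpow_one, (hW x0).2]
    · have hhol := holder_aux (W x0) (Wb x0) (fun _ => 1) hsneg
        (fun y => (hWpos x0 y).le) (fun y => (hWbpos x0 y).le)
        (fun y hy => absurd hy (ne_of_gt (hWbpos x0 y)))
        (fun _ => zero_le_one) (fun _ => le_refl 1)
      simp only [mul_one] at hhol
      rw [(hW x0).2, (hWb x0).2, Real.one_rpow, mul_one] at hhol
      have hT : 0 < ∑ y, Wb x0 y ^ s * W x0 y ^ (1 - s) := by
        apply Finset.sum_pos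
        · intro y _
          exact mul_pos (Real.rpow_pos_of_pos (hWbpos x0 y) _)
            (Real.rpow_pos_of_pos (hWpos x0 y) _)
        · exact Finset.univ_nonempty
      have h1s : (0:ℝ) < 1 - s := by linarith
      have hT1 : 1 ≤ ∑ y, Wb x0 y ^ s * W x0 y ^ (1 - s) := by
        by_contra hlt
        push_neg at hlt
        have := Real.rpow_lt_one hT.le hlt (by positivity : (0:ℝ) < 1/(1-s))
        linarith
      exact Real.log_nonneg hT1
  -- key per-n inequality
  have key : ∀ s : ℝ, s < 0 → ∀ n : ℕ,
      (-s * b n - ⨆ x, phiRel s (W x) (Wb x)) / (1 - s) ≤ a n := by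
    intro s hsneg n
    have h1s : (0:ℝ) < 1 - s := by linarith
    have hPhi := hPhi0 s hsneg.le
    set Phi := ⨆ x, phiRel s (W x) (Wb x) with hPhidef
    rcases eq_or_lt_of_le (hE0 n) with hEz | hEpos
    · have hBz : B n = 0 := (hzero n).1 hEz.symm
      rw [haE n, ← hEz, hbB n, hBz, Real.log_zero, mul_zero, mul_zero]
      apply div_nonpos_of_nonpos_of_nonneg _ h1s.le
      linarith
    · have hBpos : 0 < B n := by
        rcases eq_or_lt_of_le (hB0 n) with hBz | hBp
        · exact absurd ((hzero n).2 hBz.symm) (ne_of_gt hEpos)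
        · exact hBp
      have hhol := holder_aux (Qdist W (strats n) n) (Qdist Wb (strats n) n)
        (fun h => 1 - f n h) hsneg
        (Qdist_nonneg W (strats n) (hstr0 n) (fun x y => (hWpos x y).le) n)
        (Qdist_nonneg Wb (strats n) (hstr0 n) (fun x y => (hWbpos x y).le) n)
        (fun h => Qdist_zero Wb W hWbpos (strats n) n h)
        (hg0 n) (hg1 n)
      have hC : ∀ x, ∑ y, Wb x y ^ s * W x y ^ (1 - s) ≤ Real.exp Phi := by
        intro x
        have hTpos : 0 < ∑ y, Wb x y ^ s * W x y ^ (1 - s) := by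
          apply Finset.sum_pos
          · intro y _
            exact mul_pos (Real.rpow_pos_of_pos (hWbpos x y) _)
              (Real.rpow_pos_of_pos (hWpos x y) _)
          · exact Finset.univ_nonempty
        calc ∑ y, Wb x y ^ s * W x y ^ (1 - s)
            = Real.exp (Real.log (∑ y, Wb x y ^ s * W x y ^ (1 - s))) :=
              (Real.exp_log hTpos).symm
          _ ≤ Real.exp Phi := Real.exp_le_exp.2 (hPhile s x)
      have hA : ∑ h : Fin n → X × Y,
          Qdist Wb (strats n) n h ^ s * Qdist W (strats n) n h ^ (1 - s)
            ≤ Real.exp Phi ^ n := by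
        have heq : ∀ h : Fin n → X × Y,
            Qdist Wb (strats n) n h ^ s * Qdist W (strats n) n h ^ (1 - s)
              = Qdist (fun x y => Wb x y ^ s * W x y ^ (1 - s)) (strats n) n h := fun h =>
          Qdist_tilt W Wb hWpos hWbpos (strats n) (hstr0 n) (ne_of_lt hsneg) n h
        rw [Finset.sum_congr rfl (fun h _ => heq h)]
        exact Qdist_sum_le _ (strats n) (hstrats n)
          (fun x y => mul_nonneg (Real.rpow_nonneg (hWbpos x y).le _)
            (Real.rpow_nonneg (hWpos x y).le _))
          (Real.exp_nonneg _) hC n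
      have hA0 : 0 ≤ ∑ h : Fin n → X × Y,
          Qdist Wb (strats n) n h ^ s * Qdist W (strats n) n h ^ (1 - s) :=
        Finset.sum_nonneg fun h _ => mul_nonneg (Real.rpow_nonneg
          (Qdist_nonneg Wb (strats n) (hstr0 n) (fun x y => (hWbpos x y).le) n h) _)
          (Real.rpow_nonneg
            (Qdist_nonneg W (strats n) (hstr0 n) (fun x y => (hWpos x y).le) n h) _)
      have hEB : E n ≤ (Real.exp Phi ^ n) ^ (1 / (1 - s)) * B n ^ (-s / (1 - s)) := by
        refine le_trans hhol ?_
        apply mul_le_mul_of_nonneg_right _ (Real.rpow_nonneg (hB0 n) _)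
        exact Real.rpow_le_rpow hA0 hA (by positivity)
      have hlogE : Real.log (E n) ≤
          (1 / (1 - s)) * ((n : ℝ) * Phi) + (-s / (1 - s)) * Real.log (B n) := by
        have hrhs1 : (0:ℝ) < (Real.exp Phi ^ n) ^ (1 / (1 - s)) :=
          Real.rpow_pos_of_pos (pow_pos (Real.exp_pos _) n) _
        have hrhs2 : (0:ℝ) < B n ^ (-s / (1 - s)) := Real.rpow_pos_of_pos hBpos _
        calc Real.log (E n)
            ≤ Real.log ((Real.exp Phi ^ n) ^ (1 / (1 - s)) * B n ^ (-s / (1 - s))) :=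
              Real.log_le_log hEpos hEB
          _ = (1 / (1 - s)) * Real.log (Real.exp Phi ^ n) +
              (-s / (1 - s)) * Real.log (B n) := by
              rw [Real.log_mul (ne_of_gt hrhs1) (ne_of_gt hrhs2),
                Real.log_rpow (pow_pos (Real.exp_pos _) n), Real.log_rpow hBpos]
          _ = (1 / (1 - s)) * ((n : ℝ) * Phi) + (-s / (1 - s)) * Real.log (B n) := by
              rw [Real.log_pow, Real.log_exp]
      rw [haE n, hbB n]
      rcases Nat.eq_zero_or_pos n with hn0 | hnpos
      · subst hn0
        simp only [Nat.cast_zero, div_zero, zero_mul, mul_zero]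
        rw [zero_sub]
        apply div_nonpos_of_nonpos_of_nonneg <;> linarith
      · have hn : (0:ℝ) < n := Nat.cast_pos.2 hnpos
        rw [div_le_iff₀ h1s]
        have h2 : (1 - s) * Real.log (E n) ≤ (n : ℝ) * Phi + (-s) * Real.log (B n) := by
          calc (1 - s) * Real.log (E n)
              ≤ (1 - s) * ((1 / (1 - s)) * ((n : ℝ) * Phi) +
                  (-s / (1 - s)) * Real.log (B n)) :=
                mul_le_mul_of_nonneg_left hlogE h1s.le
            _ = (n : ℝ) * Phi + (-s) * Real.log (B n) := by field_simp
        have h4 := mul_le_mul_of_nonpos_left h2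
          (show -1 / (n:ℝ) ≤ 0 from div_nonpos_of_nonpos_of_nonneg (by norm_num) hn.le)
        have e5 : (-1 / (n:ℝ)) * ((n : ℝ) * Phi + (-s) * Real.log (B n))
            = -Phi + -s * ((-1 / (n:ℝ)) * Real.log (B n)) := by
          field_simp
          ring
        rw [e5] at h4
        have e6 : (-1 / (n:ℝ)) * ((1 - s) * Real.log (E n))
            = (-1 / (n:ℝ)) * Real.log (E n) * (1 - s) := by ring
        rw [e6] at h4
        linarith
  -- comparison between a and b
  haveI : Nonempty (X × Y) := ⟨(Classical.arbitrary X, Classical.arbitrary Y)⟩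
  set D := ⨆ p : X × Y, Wb p.1 p.2 / W p.1 p.2 with hDdef
  have hDle : ∀ x y, Wb x y / W x y ≤ D := fun x y =>
    le_ciSup (f := fun p : X × Y => Wb p.1 p.2 / W p.1 p.2)
      (Set.Finite.bddAbove (Set.finite_range _)) (x, y)
  have hWbD : ∀ x y, Wb x y ≤ D * W x y := fun x y => by
    have := (div_le_iff₀ (hWpos x y)).1 (hDle x y)
    linarith
  have hD1 : (1:ℝ) ≤ D := by
    set x0 := Classical.arbitrary X
    have h1 : (1:ℝ) = ∑ y, Wb x0 y := (hWb x0).2.symm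
    have h2 : ∑ y, Wb x0 y ≤ ∑ y, D * W x0 y :=
      Finset.sum_le_sum fun y _ => hWbD x0 y
    have h3 : ∑ y, D * W x0 y = D := by
      rw [← Finset.mul_sum, (hW x0).2, mul_one]
    linarith
  have hD0 : (0:ℝ) < D := lt_of_lt_of_le zero_lt_one hD1
  have hlogD : 0 ≤ Real.log D := Real.log_nonneg hD1
  have hQcomp : ∀ n (h : Fin n → X × Y),
      Qdist Wb (strats n) n h ≤ D ^ n * Qdist W (strats n) n h := by
    intro n h
    unfold Qdist
    calc ∏ k : Fin n, strats n k.1 (fun j : Fin k.1 => h ⟨j.1, j.2.trans k.2⟩) (h k).1 *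
          Wb (h k).1 (h k).2
        ≤ ∏ k : Fin n, D * (strats n k.1 (fun j : Fin k.1 => h ⟨j.1, j.2.trans k.2⟩) (h k).1 *
            W (h k).1 (h k).2) := by
          apply Finset.prod_le_prod
          · intro k _
            exact mul_nonneg (hstr0 n _ _ _) (hWbpos _ _).le
          · intro k _
            calc strats n k.1 (fun j : Fin k.1 => h ⟨j.1, j.2.trans k.2⟩) (h k).1 *
                Wb (h k).1 (h k).2
                ≤ strats n k.1 (fun j : Fin k.1 => h ⟨j.1, j.2.trans k.2⟩) (h k).1 *
                  (D * W (h k).1 (h k).2) :=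
                  mul_le_mul_of_nonneg_left (hWbD _ _) (hstr0 n _ _ _)
              _ = D * (strats n k.1 (fun j : Fin k.1 => h ⟨j.1, j.2.trans k.2⟩) (h k).1 *
                  W (h k).1 (h k).2) := by ring
      _ = D ^ n * ∏ k : Fin n, strats n k.1 (fun j : Fin k.1 => h ⟨j.1, j.2.trans k.2⟩) (h k).1 *
            W (h k).1 (h k).2 := by
          rw [Finset.prod_mul_distrib, Finset.prod_const, Finset.card_univ, Fintype.card_fin]
  have hBD : ∀ n, B n ≤ D ^ n * E n := by
    intro n
    calc B n ≤ ∑ h : Fin n → X × Y, D ^ n * Qdist W (strats n) n h * (1 - f n h) :=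
        Finset.sum_le_sum fun h _ =>
          mul_le_mul_of_nonneg_right (hQcomp n h) (hg0 n h)
      _ = D ^ n * E n := by
        rw [hEdef]
        rw [Finset.mul_sum]
        apply Finset.sum_congr rfl
        intro h _
        ring
  have hba : ∀ n, a n - Real.log D ≤ b n := by
    intro n
    rcases eq_or_lt_of_le (hB0 n) with hBz | hBpos
    · have hEz : E n = 0 := (hzero n).2 hBz.symm
      rw [haE n, hbB n, ← hBz, hEz, Real.log_zero, mul_zero]
      linarith
    · have hEpos : 0 < E n := by
        rcases eq_or_lt_of_le (hE0 n) with hEz | hEp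
        · exact absurd ((hzero n).1 hEz.symm) (ne_of_gt hBpos)
        · exact hEp
      rcases Nat.eq_zero_or_pos n with hn0 | hnpos
      · subst hn0
        rw [haE 0, hbB 0]
        simp only [Nat.cast_zero, div_zero, zero_mul]
        linarith
      · have hn : (0:ℝ) < n := Nat.cast_pos.2 hnpos
        have hlogB : Real.log (B n) ≤ (n:ℝ) * Real.log D + Real.log (E n) := by
          calc Real.log (B n) ≤ Real.log (D ^ n * E n) := Real.log_le_log hBpos (hBD n)
            _ = (n:ℝ) * Real.log D + Real.log (E n) := by
              rw [Real.log_mul (ne_of_gt (pow_pos hD0 n)) (ne_of_gt hEpos), Real.log_pow]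
        have h4 := mul_le_mul_of_nonpos_left hlogB
          (show -1 / (n:ℝ) ≤ 0 from div_nonpos_of_nonpos_of_nonneg (by norm_num) hn.le)
        have e5 : (-1 / (n:ℝ)) * ((n:ℝ) * Real.log D + Real.log (E n))
            = -Real.log D + (-1 / (n:ℝ)) * Real.log (E n) := by
          field_simp
          ring
        rw [e5] at h4
        rw [haE n, hbB n]
        linarith
  -- liminf assembly
  have hbddb : Filter.IsBoundedUnder (· ≥ ·) atTop b :=
    ⟨0, by rw [Filter.eventually_map]; exact Filter.Eventually.of_forall hbnn⟩
  apply ciSup_le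
  rintro ⟨s, hs⟩
  have hs' : s ≤ 0 := Set.mem_Iic.1 hs
  show (-s * r - ⨆ x, phiRel s (W x) (Wb x)) / (1 - s) ≤ Filter.liminf a atTop
  have h1s : (0:ℝ) < 1 - s := by linarith
  by_cases hcb : Filter.IsCoboundedUnder (· ≥ ·) atTop b
  · -- a is also cobounded
    have hca : Filter.IsCoboundedUnder (· ≥ ·) atTop a := by
      obtain ⟨L, hL⟩ := hcb
      refine ⟨L + Real.log D, fun c hc => ?_⟩
      rw [Filter.eventually_map] at hc
      have hbc : ∀ᶠ x in Filter.map b atTop, x ≥ c - Real.log D := by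
        rw [Filter.eventually_map]
        exact hc.mono fun n hn => by linarith [hba n]
      have := hL _ hbc
      linarith
    rcases eq_or_lt_of_le hs' with hs0 | hsneg
    · subst hs0
      have h0 : (0:ℝ) ≤ Filter.liminf a atTop :=
        le_liminf_of_le hca (Filter.Eventually.of_forall hann)
      have := hPhi0 0 le_rfl
      rw [neg_zero, zero_mul, zero_sub, sub_zero, div_one]
      linarith
    · apply le_of_forall_sub_le
      intro δ hδ
      set ε := δ * (1 - s) / (-s) with hεdef
      have hεpos : 0 < ε := by
        apply div_pos (mul_pos hδ h1s)
        linarith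
      have hev : ∀ᶠ n in atTop, r - ε < b n :=
        eventually_lt_of_lt_liminf (lt_of_lt_of_le (by linarith) hrate) hbddb
      apply le_liminf_of_le hca
      refine hev.mono fun n hn => ?_
      have hkey := key s hsneg n
      have hmono : (-s * (r - ε) - ⨆ x, phiRel s (W x) (Wb x)) / (1 - s)
          ≤ (-s * b n - ⨆ x, phiRel s (W x) (Wb x)) / (1 - s) := by
        apply (div_le_div_iff_of_pos_right h1s).2
        have : -s * (r - ε) ≤ -s * b n :=
          mul_le_mul_of_nonneg_left hn.le (by linarith)
        linarith
      have heq : (-s * (r - ε) - ⨆ x, phiRel s (W x) (Wb x)) / (1 - s)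
          = (-s * r - ⨆ x, phiRel s (W x) (Wb x)) / (1 - s) - δ := by
        have hsne : s ≠ 0 := ne_of_lt hsneg
        have h7 : -s * (r - ε) = -s * r - δ * (1 - s) := by
          rw [hεdef]
          field_simp [hsne]
          ring
        rw [h7]
        field_simp
        ring
      linarith
  · have hr0 : r ≤ 0 := le_trans hrate (le_of_eq (liminf_of_not_cobounded hcb))
    have hnum : -s * r - (⨆ x, phiRel s (W x) (Wb x)) ≤ 0 := by
      nlinarith [hPhi0 s hs']
    have h1 : (-s * r - ⨆ x, phiRel s (W x) (Wb x)) / (1 - s) ≤ 0 :=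
      div_nonpos_of_nonpos_of_nonneg hnum h1s.le
    by_cases hca : Filter.IsCoboundedUnder (· ≥ ·) atTop a
    · exact h1.trans (le_liminf_of_le hca (Filter.Eventually.of_forall hann))
    · rw [liminf_of_not_cobounded hca]
      exact h1
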